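/- Define a sequence α(s) by α(4) = 1/3 + ε for some 0 < ε ≤ 1, and α(s) = 1 - 1/(1 + α(s-1)) for s ≥ 5. Then for all s ≥ 4, α(s) > 1/(s-1); moreover, if α(s-1) ≥ 1/(s-2) + ε with 0 < ε ≤ 1, then α(s) ≥ 1/(s-1) + ε/4. -/

import Mathlib

lemma stmt10_step (c x : ℝ) (hc : 4 ≤ c) (hx : 1/(c-1) < x) :
    1/c < 1 - 1/(1+x) := by
  have hc1 : (0:ℝ) < c - 1 := by linarith
  have hxpos : 0 < x := lt_trans (by positivity) hx
  have h1x : (0:ℝ) < 1 + x := by linarith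
  have key : 1 < (c-1) * x := by
    have := mul_lt_mul_of_pos_left hx hc1
    calc (1:ℝ) = (c-1) * (1/(c-1)) := by field_simp
    _ < (c-1) * x := this
  have e : 1 - 1/(1+x) = x/(1+x) := by field_simp; ring
  rw [e, div_lt_div_iff₀ (by linarith) h1x]
  nlinarith
lemma stmt10_key (c a ε' : ℝ) (hc : 5 ≤ c) (hε : 0 < ε') (hε1 : ε' ≤ 1)
    (ha : 1/(c-2) + ε' ≤ a) : 1/(c-1) + ε'/4 ≤ 1 - 1/(1+a) := by
  have hc2 : (0:ℝ) < c - 2 := by linarith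
  have hc1 : (0:ℝ) < c - 1 := by linarith
  have hapos : 0 < a := lt_of_lt_of_le (by positivity) ha
  have h1a : (0:ℝ) < 1 + a := by linarith
  have hinv : (c-2) * (1/(c-2)) = 1 := by field_simp
  have e : 1 - 1/(1+a) = a/(1+a) := by field_simp; ring
  have e2 : 1/(c-1) + ε'/4 = (4 + ε'*(c-1))/(4*(c-1)) := by field_simp
  rw [e, e2, div_le_div_iff₀ (by positivity) h1a]
  nlinarith [mul_pos hc2 hε, mul_pos hc1 hε, mul_pos (mul_pos hc2 hc1) hε,
    mul_le_mul_of_nonneg_left ha (le_of_lt hc2),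
    mul_le_mul_of_nonneg_left ha (le_of_lt (mul_pos hc2 hc1)), sq_nonneg (c-3), sq_nonneg ε',
    mul_pos hε (mul_pos hc2 hc2), mul_pos hε hε, mul_le_one₀ hε1 (le_of_lt hε) hε1]

theorem stmt10 (ε : ℝ) (hε : 0 < ε) (hε1 : ε ≤ 1) (α : ℕ → ℝ)
    (h4 : α 4 = 1/3 + ε)
    (hrec : ∀ s : ℕ, 5 ≤ s → α s = 1 - 1/(1 + α (s - 1))) :
    (∀ s : ℕ, 4 ≤ s → 1/((s : ℝ) - 1) < α s) ∧
    (∀ s : ℕ, 5 ≤ s → ∀ ε' : ℝ, 0 < ε' → ε' ≤ 1 →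
      1/((s : ℝ) - 2) + ε' ≤ α (s - 1) → 1/((s : ℝ) - 1) + ε'/4 ≤ α s) := by
  constructor
  · intro s hs
    induction s, hs using Nat.le_induction with
    | base => rw [h4]; norm_num; linarith
    | succ n hn ih =>
      have hrec' := hrec (n+1) (by omega)
      simp only [Nat.add_sub_cancel] at hrec'
      rw [hrec']
      have hn4 : (4:ℝ) ≤ n := by exact_mod_cast hn
      have := stmt10_step (n:ℝ) (α n) hn4 ih
      push_cast
      convert this using 2
      ring
  · intro s hs ε' hε' hε'1 h
    have hc : (5:ℝ) ≤ (s:ℝ) := by exact_mod_cast hs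
    rw [hrec s hs]
    exact stmt10_key (s:ℝ) (α (s-1)) ε' hc hε' hε'1 h
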